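/- For every natural number n, the polynomial p_n(N) = Σ_{k=0}^n k! s^k C(n,k)^2 (N+ε)^{↑(n-k)} satisfies (Δ₊^{n-l} p_n)(0) = l! C(n,l) (n!/l!) (s+ε)^l for every 0 ≤ l ≤ n, where Δ₊ is the forward difference with increment ε. -/

import Mathlib

open Polynomial

/-- Forward difference operator with increment `ε`. -/
noncomputable def fdiff (ε : ℚ) (p : ℚ[X]) : ℚ[X] := C ε⁻¹ * (p.comp (X + C ε) - p)

namespace FdiffAux

variable (ε : ℚ)

lemma fdiff_add (p q : ℚ[X]) : fdiff ε (p + q) = fdiff ε p + fdiff ε q := by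
  simp only [fdiff, add_comp]; ring

lemma fdiff_C_mul (c : ℚ) (p : ℚ[X]) : fdiff ε (C c * p) = C c * fdiff ε p := by
  simp only [fdiff, mul_comp, C_comp]; ring

lemma fdiff_zero : fdiff ε 0 = 0 := by simp [fdiff]

lemma fdiff_C (c : ℚ) : fdiff ε (C c) = 0 := by simp [fdiff]

lemma iterate_zero (j : ℕ) : (fdiff ε)^[j] 0 = 0 :=
  Function.iterate_fixed (fdiff_zero ε) j

lemma iterate_C_mul (j : ℕ) (c : ℚ) (p : ℚ[X]) :
    (fdiff ε)^[j] (C c * p) = C c * (fdiff ε)^[j] p := by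
  induction j generalizing p with
  | zero => simp
  | succ j ih => rw [Function.iterate_succ_apply, fdiff_C_mul, ih, Function.iterate_succ_apply]

lemma fdiff_sum {ι : Type*} (t : Finset ι) (f : ι → ℚ[X]) :
    fdiff ε (∑ i ∈ t, f i) = ∑ i ∈ t, fdiff ε (f i) := by
  classical
  induction t using Finset.induction with
  | empty => simp [fdiff_zero]
  | insert a s h ih => simp [Finset.sum_insert h, fdiff_add, ih]

lemma iterate_sum {ι : Type*} (j : ℕ) (t : Finset ι) (f : ι → ℚ[X]) :
    (fdiff ε)^[j] (∑ i ∈ t, f i) = ∑ i ∈ t, (fdiff ε)^[j] (f i) := by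
  induction j generalizing f with
  | zero => simp
  | succ j ih =>
      rw [Function.iterate_succ_apply, fdiff_sum]
      rw [ih (fun i => fdiff ε (f i))]
      simp [Function.iterate_succ_apply]

/-- rising-type product -/
noncomputable def Rf (a : ℚ) (m : ℕ) : ℚ[X] := ∏ j ∈ Finset.range m, (X + C ((a + j) * ε))

lemma fdiff_Rf (hε : ε ≠ 0) (a : ℚ) (m : ℕ) :
    fdiff ε (Rf ε a (m + 1)) = C ((m : ℚ) + 1) * Rf ε (a + 1) m := by
  have hcomp : (Rf ε a (m + 1)).comp (X + C ε) = ∏ j ∈ Finset.range (m + 1),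
      (X + C ((a + 1 + j) * ε)) := by
    rw [Rf, prod_comp]
    refine Finset.prod_congr rfl fun j _ => ?_
    rw [add_comp, X_comp, C_comp, add_assoc, ← C_add]
    congr 2
    ring
  have h1 : ∏ j ∈ Finset.range (m + 1), (X + C ((a + 1 + j) * ε)) =
      Rf ε (a + 1) m * (X + C ((a + 1 + m) * ε)) := by
    rw [Finset.prod_range_succ]; rfl
  have h2 : Rf ε a (m + 1) = Rf ε (a + 1) m * (X + C (a * ε)) := by
    rw [Rf, Finset.prod_range_succ']
    congr 1
    · refine Finset.prod_congr rfl fun j _ => ?_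
      congr 1
      push_cast
      ring_nf
    · norm_num
  have hc : (X + C ((a + 1 + (m:ℚ)) * ε)) - (X + C (a * ε)) = C (((m : ℚ) + 1) * ε) := by
    have h : ((m : ℚ) + 1) * ε = (a + 1 + (m:ℚ)) * ε - a * ε := by ring
    rw [h, C_sub]
    ring
  rw [fdiff, hcomp, h1, h2, ← mul_sub, hc, mul_comm (Rf ε (a + 1) m), ← mul_assoc, ← C_mul]
  congr 2
  field_simp

lemma iterate_Rf (hε : ε ≠ 0) (a : ℚ) :
    ∀ j m, j ≤ m → (fdiff ε)^[j] (Rf ε a m) =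
      C ((m.descFactorial j : ℚ)) * Rf ε (a + j) (m - j) := by
  intro j
  induction j generalizing a with
  | zero => intro m _; simp [Rf]
  | succ j ih =>
      intro m hm
      obtain ⟨m', rfl⟩ : ∃ m', m = m' + 1 := ⟨m - 1, by omega⟩
      have hj : j ≤ m' := by omega
      have ha : (a + 1) + (j : ℚ) = a + ((j + 1 : ℕ) : ℚ) := by push_cast; ring
      have hco : ((m' : ℚ) + 1) * (m'.descFactorial j : ℚ) =
          (((m' + 1).descFactorial (j + 1) : ℕ) : ℚ) := by
        rw [Nat.succ_descFactorial_succ]; push_cast; ring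
      have hms : (m' + 1) - (j + 1) = m' - j := by omega
      rw [Function.iterate_succ_apply, fdiff_Rf ε hε, iterate_C_mul, ih (a + 1) m' hj,
        ← mul_assoc, ← C_mul, ha, hco, hms]

lemma iterate_Rf_zero (hε : ε ≠ 0) (a : ℚ) (m j : ℕ) (h : m < j) :
    (fdiff ε)^[j] (Rf ε a m) = 0 := by
  obtain ⟨t, rfl⟩ : ∃ t, j = (t + 1) + m := ⟨j - m - 1, by omega⟩
  rw [Function.iterate_add_apply, iterate_Rf ε hε a m m le_rfl]
  have : Rf ε (a + m) (m - m) = 1 := by simp [Rf]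
  rw [this, mul_one, Function.iterate_succ_apply, fdiff_C, iterate_zero]

lemma eval_Rf (a : ℚ) (m : ℕ) : (Rf ε a m).eval 0 = ∏ j ∈ Finset.range m, ((a + j) * ε) := by
  simp [Rf, eval_prod]

lemma prod_desc (a t : ℕ) : ∏ j ∈ Finset.range t, (a + 1 + j) = (a + t).descFactorial t := by
  induction t with
  | zero => simp
  | succ t ih =>
      rw [Finset.prod_range_succ, ih]
      show _ = ((a + t) + 1).descFactorial (t + 1)
      rw [Nat.succ_descFactorial_succ]
      ring

lemma cast_descFactorial' (m k : ℕ) (h : k ≤ m) :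
    (m.descFactorial k : ℚ) = (m.factorial : ℚ) / ((m - k).factorial : ℚ) := by
  have := Nat.factorial_mul_descFactorial h
  field_simp
  rw [mul_comm]
  exact_mod_cast this

end FdiffAux

open FdiffAux in
theorem fdiff_pn_eval_zero (n : ℕ) (s ε : ℚ) (hε : ε ≠ 0) (l : ℕ) (hl : l ≤ n) :
    ((fdiff ε)^[n - l]
        (∑ k ∈ Finset.range (n + 1),
          C ((k.factorial : ℚ) * s ^ k * (n.choose k : ℚ) ^ 2) *
            ∏ j ∈ Finset.range (n - k), (X + C (((j : ℚ) + 1) * ε)))).eval 0 =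
      (l.factorial : ℚ) * (n.choose l : ℚ) * ((n.factorial : ℚ) / (l.factorial : ℚ)) *
        (s + ε) ^ l := by
  have hQ : ∀ k : ℕ, (∏ j ∈ Finset.range (n - k), (X + C (((j : ℚ) + 1) * ε))) =
      Rf ε 1 (n - k) := by
    intro k
    refine Finset.prod_congr rfl fun j _ => ?_
    congr 1
    ring_nf
  calc ((fdiff ε)^[n - l]
        (∑ k ∈ Finset.range (n + 1),
          C ((k.factorial : ℚ) * s ^ k * (n.choose k : ℚ) ^ 2) *
            ∏ j ∈ Finset.range (n - k), (X + C (((j : ℚ) + 1) * ε)))).eval 0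
      = ∑ k ∈ Finset.range (n + 1),
          ((k.factorial : ℚ) * s ^ k * (n.choose k : ℚ) ^ 2) *
            ((fdiff ε)^[n - l] (Rf ε 1 (n - k))).eval 0 := by
        rw [iterate_sum]
        rw [eval_finset_sum]
        refine Finset.sum_congr rfl fun k _ => ?_
        rw [hQ k, iterate_C_mul, eval_mul, eval_C]
    _ = ∑ k ∈ Finset.range (l + 1),
          ((k.factorial : ℚ) * s ^ k * (n.choose k : ℚ) ^ 2) *
            ((fdiff ε)^[n - l] (Rf ε 1 (n - k))).eval 0 := by
        refine (Finset.sum_subset (Finset.range_mono (by omega)) ?_).symm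
        intro k hk hk'
        simp only [Finset.mem_range] at hk hk'
        have : n - k < n - l := by omega
        rw [iterate_Rf_zero ε hε _ _ _ this]
        simp
    _ = ∑ k ∈ Finset.range (l + 1),
          ((l.factorial : ℚ) * (n.choose l : ℚ) * ((n.factorial : ℚ) / (l.factorial : ℚ))) *
            ((l.choose k : ℚ) * s ^ k * ε ^ (l - k)) := by
        refine Finset.sum_congr rfl fun k hk => ?_
        have hkl : k ≤ l := by simpa [Nat.lt_succ_iff] using hk
        have h1 : n - l ≤ n - k := by omega
        rw [iterate_Rf ε hε 1 (n - l) (n - k) h1, eval_mul, eval_C, eval_Rf]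
        have hsub : n - k - (n - l) = l - k := by omega
        rw [hsub]
        have hprod : ∏ j ∈ Finset.range (l - k), ((1 + ((n - l : ℕ) : ℚ) + (j : ℕ)) * ε) =
            (((n - k).descFactorial (l - k) : ℚ)) * ε ^ (l - k) := by
          rw [Finset.prod_mul_distrib, Finset.prod_const, Finset.card_range]
          congr 1
          have : ∀ j ∈ Finset.range (l - k), (1 + ((n - l : ℕ) : ℚ) + (j : ℕ)) =
              ((n - l + 1 + j : ℕ) : ℚ) := by intro j _; push_cast; ring
          rw [Finset.prod_congr rfl this, ← Nat.cast_prod, prod_desc]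
          congr 2
          omega
        rw [hprod]
        -- now a scalar identity
        rw [cast_descFactorial' (n - k) (n - l) h1, cast_descFactorial' (n - k) (l - k) (by omega)]
        have e1 : n - k - (n - l) = l - k := hsub
        have e2 : n - k - (l - k) = n - l := by omega
        rw [e1, e2]
        rw [Nat.cast_choose ℚ (hkl.trans hl), Nat.cast_choose ℚ hl, Nat.cast_choose ℚ hkl]
        have hf : ∀ m : ℕ, ((m.factorial : ℚ)) ≠ 0 := fun m => by
          exact_mod_cast (Nat.factorial_pos m).ne'
        field_simp
    _ = (l.factorial : ℚ) * (n.choose l : ℚ) * ((n.factorial : ℚ) / (l.factorial : ℚ)) *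
        (s + ε) ^ l := by
        rw [← Finset.mul_sum, add_pow]
        congr 1
        refine Finset.sum_congr rfl fun k _ => ?_
        ring
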